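/- Let U₀ < 0 < U₁, v₀ > U₁ + 1, L₀ ≥ 0, and let D := {(u,v) : U₀ ≤ u ≤ U₁, v ≥ v₀}; write t := (v+u)²/4 and r := v−u on D. There exist ε̄ > 0 and C ≥ 1, depending only on U₀, U₁, v₀ and L₀, with the following property. Let Ω², R be positive C¹ functions on D with λ := ∂_v R, ν := ∂_u R, satisfying on D, for some 0 ≤ ε ≤ ε̄: |Ω² − 4t| ≤ ε·t, |∂_v log Ω² − t^{−1/2}| ≤ ε/t, |∂_u log Ω² − t^{−1/2}| ≤ ε, |R − t^{1/2}·r| ≤ ε, |λ − v| ≤ ε, |ν + u| ≤ ε. Let L ∈ [0, L₀] and let (u, v, pu, pv) : [s₀,S) → ℝ⁴ satisfy (u(s),v(s)) ∈ D for all s, u' = pu, v' = pv, pu' = −(∂_u log Ω²)·pu² − 2λL²/(Ω²R³), pv' = −(∂_v log Ω²)·pv² − 2νL²/(Ω²R³) (coefficients evaluated at (u(s),v(s))), the mass shell relation Ω²·R²·pu·pv = L², pu ≥ 0, pv ≥ 0, v(s₀) = v₀, pv(s₀) > 0 and pu(s₀) ≤ (1/2)·pv(s₀). Then for all s ∈ [s₀,S):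 C^{−1}·t(s₀)·pv(s₀) ≤ t(s)·pv(s) ≤ C·t(s₀)·pv(s₀); 0 ≤ pu(s) ≤ C·L²/(t(s)·r(s)²·t(s₀)·pv(s₀)); and u is nondecreasing with u(s) ≤ u(s₀) + C·(L/(t(s₀)·pv(s₀)))². -/

import Mathlib

set_option maxHeartbeats 2000000


open Set

lemma monoOn_Ico_of_hasDerivAt {f f' : ℝ → ℝ} {a b : ℝ}
    (h : ∀ s ∈ Ico a b, HasDerivAt f (f' s) s)
    (h0 : ∀ s ∈ Ico a b, 0 ≤ f' s) : MonotoneOn f (Ico a b) := by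
  refine monotoneOn_of_deriv_nonneg (convex_Ico a b)
    (fun s hs => (h s hs).continuousAt.continuousWithinAt) ?_ ?_
  · rw [interior_Ico]
    exact fun s hs => ((h s (Ioo_subset_Ico_self hs)).differentiableAt).differentiableWithinAt
  · rw [interior_Ico]
    intro s hs
    rw [(h s (Ioo_subset_Ico_self hs)).deriv]
    exact h0 s (Ioo_subset_Ico_self hs)

lemma antiOn_Ico_of_hasDerivAt {f f' : ℝ → ℝ} {a b : ℝ}
    (h : ∀ s ∈ Ico a b, HasDerivAt f (f' s) s)
    (h0 : ∀ s ∈ Ico a b, f' s ≤ 0) : AntitoneOn f (Ico a b) := by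
  refine antitoneOn_of_deriv_nonpos (convex_Ico a b)
    (fun s hs => (h s hs).continuousAt.continuousWithinAt) ?_ ?_
  · rw [interior_Ico]
    exact fun s hs => ((h s (Ioo_subset_Ico_self hs)).differentiableAt).differentiableWithinAt
  · rw [interior_Ico]
    intro s hs
    rw [(h s (Ioo_subset_Ico_self hs)).deriv]
    exact h0 s (Ioo_subset_Ico_self hs)

/-- Lower bound for the derivative of `q = t pv` along the geodesic flow. -/
lemma qd_lower {m r uu A Rv N DV P Q L ε : ℝ}
    (hm0 : 0 < m) (hrdef : r = 2*m - 2*uu)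
    (hA : 0 < A) (hRv : 0 < Rv)
    (hRlo : m*r - ε ≤ Rv)
    (hN : N ≤ -uu + ε)
    (hDV : |DV - 1/m| ≤ ε/m^2)
    (hP : 0 ≤ P) (hQ : 0 ≤ Q)
    (hshell : A*Rv^2*P*Q = L^2)
    (hεm : 2*ε ≤ m) (hεm2 : ε ≤ m^2) :
    -(ε*Q^2) ≤ m*(Q+P)*Q + m^2*(-DV*Q^2 - 2*N*L^2/(A*Rv^3)) := by
  have hLrw : 2*N*L^2/(A*Rv^3) = 2*N*(P*Q)/Rv := by
    rw [← hshell]; field_simp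
  have hiden : m*(Q+P)*Q + m^2*(-DV*Q^2 - 2*N*L^2/(A*Rv^3))
      = (m - 2*m^2*N/Rv)*(P*Q) + (m - m^2*DV)*Q^2 := by
    rw [hLrw]; field_simp; ring
  rw [hiden]
  have hc : 0 ≤ m - 2*m^2*N/Rv := by
    rw [sub_nonneg, div_le_iff₀ hRv]
    rcases le_or_gt N 0 with h|h
    · linarith only [mul_nonneg (sq_nonneg m) (neg_nonneg.mpr h), (mul_pos hm0 hRv).le]
    · have h1 : 2*m^2*N ≤ 2*m^2*(-uu + ε) :=
        mul_le_mul_of_nonneg_left hN (by positivity)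
      have h2 : m*(m*r - ε) ≤ m*Rv := mul_le_mul_of_nonneg_left hRlo hm0.le
      have hr2 : m*(m*r - ε) = 2*m^3 - 2*m^2*uu - m*ε := by rw [hrdef]; ring
      have hm1 : m*ε ≤ m*m^2 := mul_le_mul_of_nonneg_left hεm2 hm0.le
      have hm2 : m^2*(2*ε) ≤ m^2*m := mul_le_mul_of_nonneg_left hεm (sq_nonneg m)
      linarith only [h1, h2, hr2, hm1, hm2]
  have hd : -ε ≤ m - m^2*DV := by
    have h1 : m - m^2*DV = -(m^2*(DV - 1/m)) := by field_simp; ring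
    have h2 : |m^2*(DV - 1/m)| ≤ ε := by
      rw [abs_mul, abs_of_nonneg (by positivity : (0:ℝ) ≤ m^2)]
      calc m^2*|DV - 1/m| ≤ m^2*(ε/m^2) := by
            exact mul_le_mul_of_nonneg_left hDV (by positivity)
        _ = ε := by field_simp
    rw [h1]
    exact neg_le_neg (abs_le.1 h2).2
  have t1 : 0 ≤ (m - 2*m^2*N/Rv)*(P*Q) := mul_nonneg hc (mul_nonneg hP hQ)
  linarith only [t1, mul_le_mul_of_nonneg_right hd (sq_nonneg Q)]

/-- Upper bound for the derivative of `q = t pv`. -/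
lemma qd_upper {m r A Rv N DV P Q L ε M1 : ℝ}
    (hm0 : 0 < m) (hr1 : 1 ≤ r)
    (hAlo : 3*m^2 ≤ A) (hRv : 0 < Rv)
    (hRlo2 : m*r/2 ≤ Rv)
    (hNabs : |N| ≤ M1) (hM1 : 0 ≤ M1)
    (hDV : |DV - 1/m| ≤ ε/m^2)
    (hP : 0 ≤ P) (hQ : 0 ≤ Q)
    (hshell : A*Rv^2*P*Q = L^2) :
    m*(Q+P)*Q + m^2*(-DV*Q^2 - 2*N*L^2/(A*Rv^3))
      ≤ (4*(1+4*M1)/3)*L^2/(m^3*r^2) + ε*Q^2 := by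
  have hA : 0 < A := by
    have := pow_pos hm0 2
    linarith only [this, hAlo]
  have hLrw : 2*N*L^2/(A*Rv^3) = 2*N*(P*Q)/Rv := by
    rw [← hshell]; field_simp
  have hiden : m*(Q+P)*Q + m^2*(-DV*Q^2 - 2*N*L^2/(A*Rv^3))
      = (m - 2*m^2*N/Rv)*(P*Q) + (m - m^2*DV)*Q^2 := by
    rw [hLrw]; field_simp; ring
  rw [hiden]
  have hcK : m - 2*m^2*N/Rv ≤ (1+4*M1)*m := by
    have h0 : -N ≤ M1 := by linarith only [(abs_le.1 hNabs).1]
    have h1 : -(2*m^2*N) ≤ 2*m^2*M1 := by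
      have := mul_le_mul_of_nonneg_left h0 (by positivity : (0:ℝ) ≤ 2*m^2)
      linarith only [this]
    have h2 : 2*m^2*M1 ≤ 4*M1*m*Rv := by
      nlinarith only [mul_le_mul_of_nonneg_left hRlo2 (by positivity : (0:ℝ) ≤ 4*M1*m),
        mul_nonneg (mul_nonneg hM1 (sq_nonneg m)) (by linarith only [hr1] : (0:ℝ) ≤ r - 1)]
    have h3 : -(4*M1*m) ≤ 2*m^2*N/Rv := by
      rw [neg_le, ← neg_div, div_le_iff₀ hRv]
      linarith
    linarith
  have hRv2 : m^2*r^2/4 ≤ Rv^2 := by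
    have hmr : 0 ≤ m*r := by positivity
    nlinarith only [sq_nonneg (Rv - m*r/2), mul_le_mul_of_nonneg_left hRlo2 hmr]
  have hPQ : P*Q ≤ 4/3*L^2/(m^4*r^2) := by
    rw [le_div_iff₀ (by positivity)]
    have h1 : 3*m^2*(m^2*r^2/4) ≤ A*Rv^2 := by
      have := mul_le_mul hAlo hRv2 (by positivity) (by linarith)
      linarith
    linarith only [mul_le_mul_of_nonneg_right h1 (mul_nonneg hP hQ), hshell]
  have hd : m - m^2*DV ≤ ε := by
    have h1 : m - m^2*DV = -(m^2*(DV - 1/m)) := by field_simp; ring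
    have h2 : |m^2*(DV - 1/m)| ≤ ε := by
      rw [abs_mul, abs_of_nonneg (by positivity : (0:ℝ) ≤ m^2)]
      calc m^2*|DV - 1/m| ≤ m^2*(ε/m^2) := mul_le_mul_of_nonneg_left hDV (by positivity)
        _ = ε := by field_simp
    rw [h1]
    exact neg_le.mpr (by linarith only [(abs_le.1 h2).1])
  have s1 : (m - 2*m^2*N/Rv)*(P*Q) ≤ (1+4*M1)*m*(P*Q) :=
    mul_le_mul_of_nonneg_right hcK (mul_nonneg hP hQ)
  have s2 : (1+4*M1)*m*(P*Q) ≤ (1+4*M1)*m*(4/3*L^2/(m^4*r^2)) :=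
    mul_le_mul_of_nonneg_left hPQ (by positivity)
  have s3 : (1+4*M1)*m*(4/3*L^2/(m^4*r^2)) = (4*(1+4*M1)/3)*L^2/(m^3*r^2) := by
    field_simp
  have s4 : (m - m^2*DV)*Q^2 ≤ ε*Q^2 := mul_le_mul_of_nonneg_right hd (sq_nonneg Q)
  rw [s3] at s2
  linarith only [s1, s2, s4]

/-- The time coordinate `t = (v+u)²/4` along a curve in double null coordinates. -/
noncomputable def tOf (u v : ℝ → ℝ) (s : ℝ) : ℝ := (v s + u s) ^ 2 / 4

/-- The radial coordinate `r = v − u` along a curve in double null coordinates. -/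
noncomputable def rOf (u v : ℝ → ℝ) (s : ℝ) : ℝ := v s - u s

/-- **Null geodesic estimates on perturbed FLRW backgrounds.**
Let `U₀ < 0 < U₁`, `v₀ > U₁ + 1`, `L₀ ≥ 0` and `D = [U₀,U₁] × [v₀,∞)`, with
`t = (v+u)²/4`, `r = v−u`.  There exist `ε̄ > 0` and `C ≥ 1`, depending only on
`U₀, U₁, v₀, L₀`, such that: for any positive `C¹` double null data `(Ω², R)` on `D`
with `λ = ∂_vR`, `ν = ∂_uR` which is `ε`-close to FLRW in the sense
`|Ω² − 4t| ≤ εt`, `|∂_v log Ω² − t^{−1/2}| ≤ ε/t`, `|∂_u log Ω² − t^{−1/2}| ≤ ε`,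
`|R − t^{1/2}r| ≤ ε`, `|λ − v| ≤ ε`, `|ν + u| ≤ ε` for some `0 ≤ ε ≤ ε̄`, and any
null geodesic `(u,v,pu,pv)` in `D` with angular momentum `L ∈ [0,L₀]`, satisfying
the mass shell relation `Ω²R²·pu·pv = L²`, `pu, pv ≥ 0`, `v(s₀) = v₀`, `pv(s₀) > 0`,
`pu(s₀) ≤ pv(s₀)/2`, one has: `C^{−1}t(s₀)pv(s₀) ≤ t(s)pv(s) ≤ Ct(s₀)pv(s₀)`,
`0 ≤ pu(s) ≤ CL²/(t(s)r(s)²t(s₀)pv(s₀))`, `u` is nondecreasing and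
`u(s) ≤ u(s₀) + C(L/(t(s₀)pv(s₀)))²`. -/
theorem perturbed_flrw_geodesic_estimates (U₀ U₁ v₀ L₀ : ℝ)
    (hU₀ : U₀ < 0) (hU₁ : 0 < U₁) (hv₀ : U₁ + 1 < v₀) (hL₀ : 0 ≤ L₀) :
    ∃ εbar : ℝ, 0 < εbar ∧ ∃ C : ℝ, 1 ≤ C ∧
      ∀ (Om2 R lam nu duLogOm2 dvLogOm2 : ℝ → ℝ → ℝ) (ε : ℝ),
        0 ≤ ε → ε ≤ εbar →
        (∀ a ∈ Icc U₀ U₁, ∀ b ∈ Ici v₀,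
          0 < Om2 a b ∧ 0 < R a b ∧
          HasDerivAt (fun b' => R a b') (lam a b) b ∧
          HasDerivAt (fun a' => R a' b) (nu a b) a ∧
          HasDerivAt (fun b' => Real.log (Om2 a b')) (dvLogOm2 a b) b ∧
          HasDerivAt (fun a' => Real.log (Om2 a' b)) (duLogOm2 a b) a ∧
          |Om2 a b - 4 * ((b + a) ^ 2 / 4)| ≤ ε * ((b + a) ^ 2 / 4) ∧
          |dvLogOm2 a b - 1 / Real.sqrt ((b + a) ^ 2 / 4)| ≤ ε / ((b + a) ^ 2 / 4) ∧
          |duLogOm2 a b - 1 / Real.sqrt ((b + a) ^ 2 / 4)| ≤ ε ∧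
          |R a b - Real.sqrt ((b + a) ^ 2 / 4) * (b - a)| ≤ ε ∧
          |lam a b - b| ≤ ε ∧
          |nu a b + a| ≤ ε) →
        ∀ (L : ℝ), 0 ≤ L → L ≤ L₀ →
        ∀ (s₀ S : ℝ) (u v pu pv : ℝ → ℝ),
          (∀ s ∈ Ico s₀ S, u s ∈ Icc U₀ U₁ ∧ v s ∈ Ici v₀) →
          (∀ s ∈ Ico s₀ S, HasDerivAt u (pu s) s) →
          (∀ s ∈ Ico s₀ S, HasDerivAt v (pv s) s) →
          (∀ s ∈ Ico s₀ S, HasDerivAt pu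
            (-(duLogOm2 (u s) (v s)) * (pu s) ^ 2
              - 2 * lam (u s) (v s) * L ^ 2
                  / (Om2 (u s) (v s) * (R (u s) (v s)) ^ 3)) s) →
          (∀ s ∈ Ico s₀ S, HasDerivAt pv
            (-(dvLogOm2 (u s) (v s)) * (pv s) ^ 2
              - 2 * nu (u s) (v s) * L ^ 2
                  / (Om2 (u s) (v s) * (R (u s) (v s)) ^ 3)) s) →
          (∀ s ∈ Ico s₀ S,
            Om2 (u s) (v s) * (R (u s) (v s)) ^ 2 * pu s * pv s = L ^ 2) →
          (∀ s ∈ Ico s₀ S, 0 ≤ pu s) →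
          (∀ s ∈ Ico s₀ S, 0 ≤ pv s) →
          s₀ < S → v s₀ = v₀ → 0 < pv s₀ → pu s₀ ≤ pv s₀ / 2 →
          (∀ s ∈ Ico s₀ S,
            C⁻¹ * (tOf u v s₀ * pv s₀) ≤ tOf u v s * pv s ∧
            tOf u v s * pv s ≤ C * (tOf u v s₀ * pv s₀) ∧
            0 ≤ pu s ∧
            pu s ≤ C * L ^ 2 / (tOf u v s * (rOf u v s) ^ 2 * (tOf u v s₀ * pv s₀)) ∧
            u s ≤ u s₀ + C * (L / (tOf u v s₀ * pv s₀)) ^ 2) ∧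
          MonotoneOn u (Ico s₀ S) := by
  rcases le_or_gt (v₀ + U₀) 0 with hκneg | hκ
  · -- Degenerate case: the corner point (−v₀, v₀) lies in D and forces Ω² = 0 there.
    refine ⟨1, one_pos, 1, le_rfl, ?_⟩
    intro Om2 R lam nu duL dvL ε hε0 hεbar hdata L hL0 hLL s₀ S u v pu pv hdom hu' hv' hpu' hpv'
      hshell hpu0 hpv0 hs₀S hvs₀ hpv₀ hpu₀
    exfalso
    obtain ⟨hOm, -, -, -, -, -, h7, -⟩ :=
      hdata (-v₀) ⟨by linarith, by linarith⟩ v₀ (by simp : v₀ ∈ Ici v₀)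
    have hz : (v₀ + -v₀)^2/4 = 0 := by ring
    rw [hz] at h7
    simp only [mul_zero, sub_zero] at h7
    have := abs_nonneg (Om2 (-v₀) v₀)
    have h8 : |Om2 (-v₀) v₀| = 0 := le_antisymm h7 this
    rw [abs_eq_zero] at h8
    linarith
  · set E := Real.exp 1 with hE
    set M := max (-U₀) U₁ with hM
    set K := (5:ℝ) + 4*M with hK
    set T := 2*U₁ + 1 with hT
    set Λ := 3*(v₀ - U₀) with hΛ
    set κ := v₀ + U₀ with hκd
    have hE1 : 1 ≤ E := by rw [hE]; nlinarith [Real.exp_one_gt_d9]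
    have hE0 : 0 < E := by linarith
    have hM0 : 0 < M := lt_of_lt_of_le hU₁ (le_max_right _ _)
    have hK5 : (5:ℝ) ≤ K := by rw [hK]; nlinarith
    have hK0 : 0 < K := by linarith
    have hT1 : (1:ℝ) ≤ T := by rw [hT]; linarith
    have hT0 : 0 < T := by linarith
    have hΛ0 : 0 < Λ := by rw [hΛ]; linarith
    set C := E + 4*E/3 + E + 16*E^2*K*T^2*Λ^2/(3*κ^2) + 16*E^2*T^2/(3*κ) + 1 with hC
    have hpos4 : 0 ≤ 16*E^2*K*T^2*Λ^2/(3*κ^2) := by positivity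
    have hpos5 : 0 ≤ 16*E^2*T^2/(3*κ) := div_nonneg (by positivity) (by linarith)
    have hC1 : 1 ≤ C := by rw [hC]; linarith
    have hEC : E ≤ C := by rw [hC]; linarith
    have hC0 : 0 < C := by linarith
    clear_value E M K T Λ C κ
    refine ⟨min 1 (min (κ/4) (κ^2/4)), lt_min one_pos (lt_min (by linarith)
      (by nlinarith)), C, hC1, ?_⟩
    intro Om2 R lam nu duL dvL ε hε0 hεbar hdata L hL0 hLL s₀ S u v pu pv hdom hu' hv' hpu' hpv'
      hshell hpu0 hpv0 hs₀S hvs₀ hpv₀ hpu₀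
    have hε1 : ε ≤ 1 := le_trans hεbar (min_le_left _ _)
    have hεκ : ε ≤ κ/4 := le_trans hεbar (le_trans (min_le_right _ _) (min_le_left _ _))
    have hεκ2 : ε ≤ κ^2/4 := le_trans hεbar (le_trans (min_le_right _ _) (min_le_right _ _))
    set mm : ℝ → ℝ := fun x => (v x + u x)/2 with hmmd
    have hs₀mem : s₀ ∈ Ico s₀ S := ⟨le_refl _, hs₀S⟩
    have hwd : ∀ s ∈ Ico s₀ S, HasDerivAt (fun x => v x + u x) (pv s + pu s) s :=
      fun s hs => (hv' s hs).add (hu' s hs)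
    have hwmono : MonotoneOn (fun x => v x + u x) (Ico s₀ S) :=
      monoOn_Ico_of_hasDerivAt hwd (fun s hs => add_nonneg (hpv0 s hs) (hpu0 s hs))
    have hκw : ∀ s ∈ Ico s₀ S, κ ≤ v s + u s := by
      intro s hs
      have h1 : U₀ ≤ u s₀ := ((hdom s₀ hs₀mem).1).1
      have h2 := hwmono hs₀mem hs hs.1
      simp only at h2
      rw [hκd]
      rw [hvs₀] at h2 -- careful
      linarith
    have hm_lb : ∀ s ∈ Ico s₀ S, κ/2 ≤ mm s := by
      intro s hs; have := hκw s hs; simp only [hmmd]; linarith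
    have hm_pos : ∀ s ∈ Ico s₀ S, 0 < mm s := fun s hs => lt_of_lt_of_le (by linarith) (hm_lb s hs)
    have hm_mono : ∀ s ∈ Ico s₀ S, mm s₀ ≤ mm s := by
      intro s hs
      have := hwmono hs₀mem hs hs.1
      simp only [hmmd] at *
      linarith
    have htOf : ∀ x, tOf u v x = mm x^2 := by
      intro x; rw [tOf]; show _ = ((v x + u x)/2)^2; ring
    have hrOf : ∀ x, rOf u v x = v x - u x := fun x => rfl
    have hr1 : ∀ s ∈ Ico s₀ S, 1 ≤ v s - u s := by
      intro s hs
      have h1 : u s ≤ U₁ := ((hdom s hs).1).2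
      have h2 : v₀ ≤ v s := (hdom s hs).2
      linarith
    have hrT : ∀ s ∈ Ico s₀ S, mm s ≤ T*(v s - u s) := by
      intro s hs
      have h1 : u s ≤ U₁ := ((hdom s hs).1).2
      have h2 := hr1 s hs
      have h3 : mm s = (v s + u s)/2 := rfl
      rcases le_or_gt (mm s) T with h|h
      · have hp : 0 ≤ T*(v s - u s - 1) :=
          mul_nonneg (by linarith only [hT0]) (by linarith only [h2])
        linarith only [hp, h]
      · rw [hT] at h ⊢
        have hp : 0 ≤ 2*U₁*(v s - u s - 1) :=
          mul_nonneg (by linarith only [hU₁]) (by linarith only [h2])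
        linarith only [hp, h, h1, h2, h3, hU₁]
    have hpt : ∀ s ∈ Ico s₀ S,
        0 < Om2 (u s) (v s) ∧ 0 < R (u s) (v s) ∧
        |Om2 (u s) (v s) - 4*(mm s)^2| ≤ ε*(mm s)^2 ∧
        |dvL (u s) (v s) - 1/(mm s)| ≤ ε/(mm s)^2 ∧
        |R (u s) (v s) - mm s*(v s - u s)| ≤ ε ∧
        |nu (u s) (v s) + u s| ≤ ε := by
      intro s hs
      obtain ⟨h1, h2, -, -, -, -, h7, h8, -, h10, -, h12⟩ :=
        hdata (u s) (hdom s hs).1 (v s) (hdom s hs).2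
      have hteq : (v s + u s)^2/4 = (mm s)^2 := by
        show _ = ((v s + u s)/2)^2; ring
      have hsq : Real.sqrt ((v s + u s)^2/4) = mm s := by
        rw [hteq, Real.sqrt_sq (hm_pos s hs).le]
      rw [hsq] at h8 h10
      rw [hteq] at h7 h8
      exact ⟨h1, h2, h7, h8, h10, h12⟩
    -- the derivative of q = t · pv
    set qd : ℝ → ℝ := fun s => mm s*(pv s + pu s)*pv s
      + mm s^2*(-(dvL (u s) (v s))*pv s^2
        - 2*nu (u s) (v s)*L^2/(Om2 (u s) (v s)*R (u s) (v s)^3)) with hqdd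
    have hqD : ∀ s ∈ Ico s₀ S, HasDerivAt (fun x => tOf u v x * pv x) (qd s) s := by
      intro s hs
      have h1 : HasDerivAt (fun x => (v x + u x)^2/4) (mm s*(pv s + pu s)) s := by
        have h := ((hwd s hs).pow 2).div_const 4
        refine h.congr_deriv (Eq.symm ?_)
        show mm s * (pv s + pu s) = _
        have h3 : mm s = (v s + u s)/2 := rfl
        rw [h3]
        push_cast
        ring
      have h2 := h1.mul (hpv' s hs)
      have h3 : (fun x => tOf u v x * pv x) = fun x => (v x + u x)^2/4 * pv x := by
        funext x; rw [tOf]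
      rw [h3]
      refine h2.congr_deriv (Eq.symm ?_)
      rw [hqdd]
      show _ = mm s * (pv s + pu s) * pv s + (v s + u s)^2/4 *
        (-(dvL (u s) (v s))*pv s^2 - 2*nu (u s) (v s)*L^2/(Om2 (u s) (v s)*R (u s) (v s)^3))
      have h4 : (v s + u s)^2/4 = (mm s)^2 := by show _ = ((v s + u s)/2)^2; ring
      rw [h4]
    have hε2m : ∀ s ∈ Ico s₀ S, 2*ε ≤ mm s := by
      intro s hs; have := hm_lb s hs; linarith
    have hεm2 : ∀ s ∈ Ico s₀ S, ε ≤ mm s^2 := by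
      intro s hs
      have h := hm_lb s hs
      have hm0 := hm_pos s hs
      have h' : κ/2*(κ/2) ≤ mm s*mm s :=
        mul_le_mul h h (by linarith only [hκ]) hm0.le
      nlinarith only [h', hεκ2]
    have hRlo2 : ∀ s ∈ Ico s₀ S, mm s*(v s - u s)/2 ≤ R (u s) (v s) := by
      intro s hs
      obtain ⟨-, -, -, -, h10, -⟩ := hpt s hs
      have h1 := (abs_le.1 h10).1
      have h2 : κ/2 ≤ mm s := hm_lb s hs
      have h3 := hr1 s hs
      have h4 : κ/2*1 ≤ mm s*(v s - u s) := by
        apply mul_le_mul h2 h3 one_pos.le (hm_pos s hs).le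
      linarith only [h1, h4, hεκ]
    have hAlo : ∀ s ∈ Ico s₀ S, 3*mm s^2 ≤ Om2 (u s) (v s) := by
      intro s hs
      obtain ⟨-, -, h7, -⟩ := hpt s hs
      have h1 := (abs_le.1 h7).1
      have hh : 0 ≤ (1-ε)*mm s^2 := mul_nonneg (by linarith only [hε1]) (sq_nonneg _)
      linarith only [h1, hh]
    have hqd_lb : ∀ s ∈ Ico s₀ S, -(ε*pv s^2) ≤ qd s := by
      intro s hs
      obtain ⟨h1, h2, h7, h8, h10, h12⟩ := hpt s hs
      exact qd_lower (hm_pos s hs) (by show v s - u s = 2*((v s + u s)/2) - 2*u s; ring)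
        h1 h2 (by linarith [(abs_le.1 h10).1]) (by linarith [(abs_le.1 h12).2]) h8
        (hpu0 s hs) (hpv0 s hs) (hshell s hs) (hε2m s hs) (hεm2 s hs)
    have hqd_ub : ∀ s ∈ Ico s₀ S,
        qd s ≤ (4*K/3)*L^2/(mm s^3*(v s - u s)^2) + ε*pv s^2 := by
      intro s hs
      obtain ⟨h1, h2, h7, h8, h10, h12⟩ := hpt s hs
      have hNabs : |nu (u s) (v s)| ≤ M + 1 := by
        have ha := abs_le.1 h12
        have hb : U₀ ≤ u s := ((hdom s hs).1).1
        have hc : u s ≤ U₁ := ((hdom s hs).1).2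
        have hd1 : -U₀ ≤ M := by rw [hM]; exact le_max_left _ _
        have hd2 : U₁ ≤ M := by rw [hM]; exact le_max_right _ _
        rw [abs_le]
        constructor <;> linarith only [ha.1, ha.2, hb, hc, hd1, hd2, hε1]
      have hKeq : (4*K/3) = 4*(1+4*(M+1))/3 := by rw [hK]; ring
      rw [hKeq]
      exact qd_upper (hm_pos s hs) (hr1 s hs) (hAlo s hs) h2 (hRlo2 s hs) hNabs
        (by linarith) h8 (hpu0 s hs) (hpv0 s hs) (hshell s hs)
    have hmD : ∀ s ∈ Ico s₀ S, HasDerivAt mm ((pv s + pu s)/2) s :=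
      fun s hs => (hwd s hs).div_const 2
    clear_value mm qd
    set ph : ℝ → ℝ := fun x => -(2*ε)/mm x with hphd
    have hphD : ∀ s ∈ Ico s₀ S, HasDerivAt ph (ε*(pv s + pu s)/mm s^2) s := by
      intro s hs
      have h := (hasDerivAt_const s (-(2*ε))).div (hmD s hs) (hm_pos s hs).ne'
      refine h.congr_deriv (Eq.symm ?_)
      field_simp [(hm_pos s hs).ne']
      ring
    set q0 := tOf u v s₀ * pv s₀ with hq0d
    have htpos : ∀ s ∈ Ico s₀ S, 0 < tOf u v s := by
      intro s hs; rw [htOf]; exact pow_pos (hm_pos s hs) 2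
    have hq0pos : 0 < q0 := by rw [hq0d]; exact mul_pos (htpos s₀ hs₀mem) hpv₀
    set eI := Real.exp (-1) with heid
    have heI0 : 0 < eI := Real.exp_pos _
    have hEeI : eI*E = 1 := by rw [heid, hE, ← Real.exp_add]; norm_num
    have hEi : eI = E⁻¹ := eq_inv_of_mul_eq_one_left hEeI
    clear_value q0 eI
    have hph_lb : ∀ s ∈ Ico s₀ S, -1 ≤ ph s₀ - ph s := by
      intro s hs
      have ha : 2*ε/mm s₀ ≤ 1 := by
        rw [div_le_one (hm_pos s₀ hs₀mem)]; exact hε2m s₀ hs₀mem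
      have hb : 0 ≤ 2*ε/mm s := div_nonneg (by linarith) (hm_pos s hs).le
      have hc : ph s₀ - ph s = -(2*ε/mm s₀) + 2*ε/mm s := by
        show -(2*ε)/mm s₀ - -(2*ε)/mm s = _; ring
      linarith [hc.ge, hc.le]
    have hph_mono : ∀ s ∈ Ico s₀ S, ph s₀ ≤ ph s := by
      intro s hs
      have h1 := hm_mono s hs
      have h2 := hm_pos s₀ hs₀mem
      have h3 := hm_pos s hs
      show -(2*ε)/mm s₀ ≤ -(2*ε)/mm s
      rw [neg_div, neg_div, neg_le_neg_iff, div_le_div_iff₀ h3 h2]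
      have h4 := mul_le_mul_of_nonneg_left h1 (by linarith only [hε0] : (0:ℝ) ≤ 2*ε)
      linarith only [h4]
    clear_value ph
    have hFD : ∀ s ∈ Ico s₀ S, HasDerivAt (fun x => tOf u v x * pv x * Real.exp (ph x))
        (qd s * Real.exp (ph s) + tOf u v s * pv s *
          (Real.exp (ph s) * (ε*(pv s + pu s)/mm s^2))) s :=
      fun s hs => (hqD s hs).mul ((hphD s hs).exp)
    have hFmono : MonotoneOn (fun x => tOf u v x * pv x * Real.exp (ph x)) (Ico s₀ S) := by
      apply monoOn_Ico_of_hasDerivAt hFD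
      intro s hs
      have e1 : tOf u v s * pv s * (Real.exp (ph s) * (ε*(pv s + pu s)/mm s^2))
          = Real.exp (ph s) * (ε*pv s*(pv s + pu s)) := by
        rw [htOf s]; field_simp [(hm_pos s hs).ne']
      rw [e1]
      have t1 : 0 ≤ Real.exp (ph s) * (qd s + ε*pv s^2) :=
        mul_nonneg (Real.exp_pos _).le (by linarith [hqd_lb s hs])
      have t2 : 0 ≤ Real.exp (ph s) * (ε*pv s*pu s) :=
        mul_nonneg (Real.exp_pos _).le
          (mul_nonneg (mul_nonneg hε0 (hpv0 s hs)) (hpu0 s hs))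
      have key : qd s * Real.exp (ph s) + Real.exp (ph s)*(ε*pv s*(pv s + pu s))
          = Real.exp (ph s)*(qd s + ε*pv s^2) + Real.exp (ph s)*(ε*pv s*pu s) := by ring
      rw [key]
      exact add_nonneg t1 t2
    have hql : ∀ s ∈ Ico s₀ S, q0*eI ≤ tOf u v s * pv s := by
      intro s hs
      have h1 : tOf u v s₀ * pv s₀ * Real.exp (ph s₀) ≤ tOf u v s * pv s * Real.exp (ph s) :=
        hFmono hs₀mem hs hs.1
      calc q0*eI = q0*Real.exp (-1) := by rw [heid]
        _ ≤ q0*Real.exp (ph s₀ - ph s) :=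
            mul_le_mul_of_nonneg_left (Real.exp_le_exp.mpr (hph_lb s hs)) hq0pos.le
        _ ≤ tOf u v s * pv s := by
            rw [Real.exp_sub, ← mul_div_assoc, div_le_iff₀ (Real.exp_pos _), hq0d]
            exact h1
    have hpv_pos : ∀ s ∈ Ico s₀ S, 0 < pv s := by
      intro s hs
      by_contra hcon
      push_neg at hcon
      have h1 : tOf u v s * pv s ≤ 0 :=
        mul_nonpos_iff.mpr (Or.inl ⟨(htpos s hs).le, hcon⟩)
      linarith only [h1, mul_pos hq0pos heI0, hql s hs]
    have hqlow' : ∀ s ∈ Ico s₀ S, q0*eI/mm s^2 ≤ pv s := by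
      intro s hs
      rw [div_le_iff₀ (pow_pos (hm_pos s hs) 2)]
      have h := hql s hs
      rw [htOf] at h
      linarith
    have hpu_prod : ∀ s ∈ Ico s₀ S, pu s * (mm s^2*(v s - u s)^2*q0) ≤ 4*E/3*L^2 := by
      intro s hs
      obtain ⟨hA, hRv, h7, h8, h10, h12⟩ := hpt s hs
      have hA3 := hAlo s hs
      have hR2 := hRlo2 s hs
      have hmr : 0 ≤ mm s*(v s - u s) :=
        mul_nonneg (hm_pos s hs).le (by linarith [hr1 s hs])
      have hRv2 : mm s^2*(v s - u s)^2/4 ≤ R (u s) (v s)^2 := by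
        nlinarith only [sq_nonneg (R (u s) (v s) - mm s*(v s - u s)/2),
          mul_le_mul_of_nonneg_left hR2 hmr]
      have hQl := hqlow' s hs
      have hq0eI : 0 ≤ q0*eI/mm s^2 :=
        div_nonneg (mul_nonneg hq0pos.le heI0.le) (sq_nonneg _)
      have step : 3*mm s^2*(mm s^2*(v s - u s)^2/4)*(q0*eI/mm s^2)
          ≤ Om2 (u s) (v s)*R (u s) (v s)^2*pv s := by
        apply mul_le_mul (mul_le_mul hA3 hRv2 (by positivity) (by linarith)) hQl hq0eI
        exact mul_nonneg (by linarith) (sq_nonneg _)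
      have hsh : pu s * (Om2 (u s) (v s)*R (u s) (v s)^2*pv s) = L^2 := by
        rw [← hshell s hs]; ring
      have step2 : pu s * (3*mm s^2*(mm s^2*(v s - u s)^2/4)*(q0*eI/mm s^2)) ≤ L^2 := by
        calc pu s * (3*mm s^2*(mm s^2*(v s - u s)^2/4)*(q0*eI/mm s^2))
            ≤ pu s * (Om2 (u s) (v s)*R (u s) (v s)^2*pv s) :=
              mul_le_mul_of_nonneg_left step (hpu0 s hs)
          _ = L^2 := hsh
      have e2 : pu s * (3*mm s^2*(mm s^2*(v s - u s)^2/4)*(q0*eI/mm s^2))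
          = 3/4*eI*(pu s*(mm s^2*(v s - u s)^2*q0)) := by
        field_simp [(hm_pos s hs).ne']
      rw [e2] at step2
      have h4 : (4*E/3)*(3/4*eI) = 1 := by
        rw [hEi]; field_simp
      have e3 : pu s*(mm s^2*(v s - u s)^2*q0)
          = 4*E/3*(3/4*eI*(pu s*(mm s^2*(v s - u s)^2*q0))) := by
        calc pu s*(mm s^2*(v s - u s)^2*q0)
            = ((4*E/3)*(3/4*eI))*(pu s*(mm s^2*(v s - u s)^2*q0)) := by rw [h4, one_mul]
          _ = 4*E/3*(3/4*eI*(pu s*(mm s^2*(v s - u s)^2*q0))) := by ring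
      rw [e3]
      exact mul_le_mul_of_nonneg_left step2 (by linarith)
    have hLq : L^2 ≤ Λ^2*q0^2 := by
      obtain ⟨hA0, hR0, h7, h8, h10, h12⟩ := hpt s₀ hs₀mem
      have hm0' := hm_pos s₀ hs₀mem
      have hr1' := hr1 s₀ hs₀mem
      have hA5 : Om2 (u s₀) (v s₀) ≤ 5*mm s₀^2 := by
        have h := (abs_le.1 h7).2
        have hh : 0 ≤ (1-ε)*mm s₀^2 := mul_nonneg (by linarith only [hε1]) (sq_nonneg _)
        linarith only [h, hh]
      have hmr : κ/2*1 ≤ mm s₀*(v s₀ - u s₀) :=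
        mul_le_mul (hm_lb s₀ hs₀mem) hr1' one_pos.le hm0'.le
      have hR32 : R (u s₀) (v s₀) ≤ 3/2*(mm s₀*(v s₀ - u s₀)) := by
        have h := (abs_le.1 h10).2
        linarith only [h, hmr, hεκ]
      have hR0sq : R (u s₀) (v s₀)^2 ≤ 9/4*(mm s₀*(v s₀ - u s₀))^2 := by
        nlinarith only [hR32, hR0]
      have hAR : Om2 (u s₀) (v s₀)*R (u s₀) (v s₀)^2
          ≤ 5*mm s₀^2*(9/4*(mm s₀*(v s₀ - u s₀))^2) :=
        mul_le_mul hA5 hR0sq (sq_nonneg _) (by positivity)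
      have hPQ0 : pu s₀*pv s₀ ≤ pv s₀^2/2 := by nlinarith only [hpu₀, hpv₀]
      have hLsh : L^2 = Om2 (u s₀) (v s₀)*R (u s₀) (v s₀)^2*(pu s₀*pv s₀) := by
        rw [← hshell s₀ hs₀mem]; ring
      have h1 : L^2 ≤ 5*mm s₀^2*(9/4*(mm s₀*(v s₀ - u s₀))^2)*(pv s₀^2/2) := by
        rw [hLsh]
        exact mul_le_mul hAR hPQ0
          (mul_nonneg (hpu0 s₀ hs₀mem) (hpv0 s₀ hs₀mem)) (by positivity)
      have hru : v s₀ - u s₀ ≤ v₀ - U₀ := by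
        have h := ((hdom s₀ hs₀mem).1).1
        linarith only [h, hvs₀.le, hvs₀.ge]
      have h2 : (v s₀ - u s₀)^2 ≤ (v₀ - U₀)^2 := by nlinarith only [hru, hr1']
      have hq0m : q0 = mm s₀^2*pv s₀ := by rw [hq0d, htOf]
      rw [hΛ, hq0m]
      have h4 := mul_le_mul_of_nonneg_left h2
        (by positivity : (0:ℝ) ≤ mm s₀^4*pv s₀^2)
      have hX : (0:ℝ) ≤ mm s₀^4*pv s₀^2*(v s₀ - u s₀)^2 := by positivity
      nlinarith only [h1, h4, hX]
    set aa := 8*E*K*T^2/3*L^2/q0 with haad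
    clear_value aa
    have hc8 : (0:ℝ) ≤ 8*E*K*T^2/3 := by
      apply div_nonneg _ (by norm_num)
      apply mul_nonneg _ (sq_nonneg T)
      apply mul_nonneg _ hK0.le
      exact mul_nonneg (by norm_num) hE0.le
    have haa0 : 0 ≤ aa := by
      rw [haad]
      apply div_nonneg _ hq0pos.le
      apply mul_nonneg _ (sq_nonneg L)
      apply div_nonneg _ (by norm_num)
      apply mul_nonneg _ (sq_nonneg T)
      apply mul_nonneg _ hK0.le
      exact mul_nonneg (by norm_num) hE0.le
    have hclaim : ∀ s ∈ Ico s₀ S,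
        (4*K/3)*L^2/(mm s^3*(v s - u s)^2) ≤ aa*(pv s + pu s)/(2*mm s^3) := by
      intro s hs
      have hm := hm_pos s hs
      have hr := hr1 s hs
      have hr0 : (0:ℝ) < v s - u s := by linarith only [hr]
      have hTr0 : 0 ≤ T*(v s - u s) := mul_nonneg hT0.le hr0.le
      have hmT : mm s^2 ≤ T^2*(v s - u s)^2 := by
        nlinarith only [mul_le_mul (hrT s hs) (hrT s hs) hm.le hTr0]
      have pos1 : (0:ℝ) < mm s^3*(v s - u s)^2 := mul_pos (pow_pos hm 3) (pow_pos hr0 2)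
      have pos2 : (0:ℝ) < mm s^5 := pow_pos hm 5
      have step1 : (4*K/3)*L^2/(mm s^3*(v s - u s)^2) ≤ (4*K*T^2/3)*L^2/mm s^5 := by
        rw [div_le_div_iff₀ pos1 pos2]
        have hcc : (0:ℝ) ≤ 4*K/3*L^2*mm s^3 := by
          apply mul_nonneg _ (pow_nonneg hm.le 3)
          apply mul_nonneg _ (sq_nonneg L)
          apply div_nonneg _ (by norm_num)
          exact mul_nonneg (by norm_num) hK0.le
        have hint := mul_le_mul_of_nonneg_left hmT hcc
        nlinarith only [hint]
      have step2 : (4*K*T^2/3)*L^2/mm s^5 ≤ aa*(pv s + pu s)/(2*mm s^3) := by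
        have hQl := hqlow' s hs
        have h1 : aa*(q0*eI/mm s^2) ≤ aa*pv s := mul_le_mul_of_nonneg_left hQl haa0
        have h2 : aa*pv s ≤ aa*(pv s + pu s) :=
          mul_le_mul_of_nonneg_left (by linarith only [hpu0 s hs]) haa0
        have h3 : aa*(q0*eI/mm s^2) = 8*K*T^2/3*L^2/mm s^2 := by
          rw [haad, hEi]
          field_simp
        have h9 : 8*K*T^2/3*L^2/mm s^2 ≤ aa*(pv s + pu s) := by
          rw [← h3]; exact h1.trans h2
        rw [div_le_div_iff₀ pos2 (mul_pos two_pos (pow_pos hm 3))]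
        have h10 := mul_le_mul_of_nonneg_right h9 (pow_pos hm 5).le
        have h11 : 8*K*T^2/3*L^2/mm s^2*mm s^5 = (4*K*T^2/3)*L^2*(2*mm s^3) := by
          field_simp
          ring
        rw [h11] at h10
        linarith only [h10]
      exact step1.trans step2
    have hWD : ∀ s ∈ Ico s₀ S, HasDerivAt
        (fun x => tOf u v x*pv x*Real.exp (ph s₀ - ph x) + aa/(2*mm x^2))
        (Real.exp (ph s₀ - ph s)*(qd s - ε*pv s*(pv s + pu s))
          - aa*(pv s + pu s)/(2*mm s^3)) s := by
      intro s hs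
      have hm := hm_pos s hs
      have h1 : HasDerivAt (fun x => ph s₀ - ph x) (-(ε*(pv s + pu s)/mm s^2)) s := by
        have := (hphD s hs).const_sub (ph s₀)
        convert this using 1
      have h2 := (hqD s hs).mul h1.exp
      have h3 : HasDerivAt (fun x => 2*mm x^2)
          ((2:ℝ)*((2:ℕ)*mm s^(2-1)*((pv s + pu s)/2))) s := ((hmD s hs).pow 2).const_mul 2
      have h4 := (hasDerivAt_const s aa).div h3 (mul_pos two_pos (pow_pos hm 2)).ne'
      have h5 := h2.add h4
      refine h5.congr_deriv (Eq.symm ?_)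
      rw [htOf s]
      push_cast
      field_simp
      ring
    have hWanti : AntitoneOn
        (fun x => tOf u v x*pv x*Real.exp (ph s₀ - ph x) + aa/(2*mm x^2)) (Ico s₀ S) := by
      apply antiOn_Ico_of_hasDerivAt hWD
      intro s hs
      have hm := hm_pos s hs
      have hZY : qd s - ε*pv s*(pv s + pu s) ≤ aa*(pv s + pu s)/(2*mm s^3) := by
        have h1 := hqd_ub s hs
        have h2 : ε*pv s^2 ≤ ε*pv s*(pv s + pu s) := by
          have := mul_nonneg (mul_nonneg hε0 (hpv0 s hs)) (hpu0 s hs)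
          linarith only [this]
        linarith only [h1, h2, hclaim s hs]
      have hEx1 : Real.exp (ph s₀ - ph s) ≤ 1 := by
        rw [show (1:ℝ) = Real.exp 0 from Real.exp_zero.symm]
        exact Real.exp_le_exp.mpr (by linarith only [hph_mono s hs])
      have hY0 : 0 ≤ aa*(pv s + pu s)/(2*mm s^3) :=
        div_nonneg (mul_nonneg haa0 (add_nonneg (hpv0 s hs) (hpu0 s hs)))
          (mul_nonneg (by norm_num) (pow_nonneg hm.le 3))
      have p1 := mul_le_mul_of_nonneg_left hZY (Real.exp_pos (ph s₀ - ph s)).le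
      have p2 := mul_le_mul_of_nonneg_right hEx1 hY0
      linarith only [p1, p2]
    have hκ2 : (0:ℝ) < κ^2 := by nlinarith only [hκ]
    have hqup : ∀ s ∈ Ico s₀ S, tOf u v s*pv s ≤ C*q0 := by
      intro s hs
      have hm := hm_pos s hs
      have h1 := hWanti hs₀mem hs hs.1
      simp only [sub_self, Real.exp_zero, mul_one] at h1
      have h2 : 0 ≤ aa/(2*mm s^2) :=
        div_nonneg haa0 (mul_nonneg (by norm_num) (sq_nonneg _))
      have h3 : tOf u v s*pv s*Real.exp (ph s₀ - ph s) ≤ q0 + aa/(2*mm s₀^2) := by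
        rw [hq0d]; linarith only [h1, h2]
      have htp0 : 0 ≤ tOf u v s*pv s := mul_nonneg (htpos s hs).le (hpv0 s hs)
      have h5 : eI ≤ Real.exp (ph s₀ - ph s) := by
        rw [heid]; exact Real.exp_le_exp.mpr (hph_lb s hs)
      have h6 : tOf u v s*pv s*eI ≤ q0 + aa/(2*mm s₀^2) :=
        le_trans (mul_le_mul_of_nonneg_left h5 htp0) h3
      have h7 : tOf u v s*pv s ≤ (q0 + aa/(2*mm s₀^2))*E := by
        have h8 := mul_le_mul_of_nonneg_right h6 hE0.le
        have h9 : tOf u v s*pv s*eI*E = tOf u v s*pv s := by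
          rw [mul_assoc, hEeI, mul_one]
        rw [h9] at h8; exact h8
      have h10 : aa/(2*mm s₀^2) ≤ 2*aa/κ^2 := by
        rw [div_le_div_iff₀ (mul_pos two_pos (pow_pos (hm_pos s₀ hs₀mem) 2)) hκ2]
        have h11 : κ^2 ≤ 4*mm s₀^2 := by nlinarith only [hm_lb s₀ hs₀mem, hκ]
        nlinarith only [mul_le_mul_of_nonneg_left h11 haa0]
      have haaub : aa ≤ 8*K*T^2/3*Λ^2*q0*E := by
        rw [haad, div_le_iff₀ hq0pos]
        have h12 := mul_le_mul_of_nonneg_left hLq hc8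
        nlinarith only [h12]
      have h13 : (q0 + aa/(2*mm s₀^2))*E ≤ (q0 + 2*aa/κ^2)*E :=
        mul_le_mul_of_nonneg_right (by linarith only [h10]) hE0.le
      have hXle : 2*aa/κ^2*E ≤ 16*E^2*K*T^2*Λ^2/(3*κ^2)*q0 := by
        rw [div_mul_eq_mul_div, div_le_iff₀ hκ2]
        have h15 := mul_le_mul_of_nonneg_right haaub
          (by linarith only [hE0] : (0:ℝ) ≤ 2*E)
        have h16 : 8*K*T^2/3*Λ^2*q0*E*(2*E) = 16*E^2*K*T^2*Λ^2/(3*κ^2)*q0*κ^2 := by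
          field_simp
          ring
        nlinarith only [h15, h16]
      have hCge : E + 16*E^2*K*T^2*Λ^2/(3*κ^2) ≤ C := by
        rw [hC]; linarith only [hE0, hpos5]
      have hE' : (q0 + 2*aa/κ^2)*E = E*q0 + 2*aa/κ^2*E := by ring
      have hc4 : 16*E^2*K*T^2*Λ^2/(3*κ^2)*q0 ≤ (C - E)*q0 :=
        mul_le_mul_of_nonneg_right (by linarith only [hCge]) hq0pos.le
      linarith only [h7, h13, hXle, hE'.le, hE'.ge, hc4]
    set bb := 8*E^2*T^2/3*L^2/q0^2 with hbbd
    clear_value bb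
    have hbb0 : 0 ≤ bb := by
      rw [hbbd]
      apply div_nonneg _ (sq_nonneg q0)
      apply mul_nonneg _ (sq_nonneg L)
      apply div_nonneg _ (by norm_num)
      exact mul_nonneg (mul_nonneg (by norm_num) (sq_nonneg E)) (sq_nonneg T)
    have hpuB : ∀ s ∈ Ico s₀ S, pu s ≤ bb*(pv s + pu s)/(2*mm s^2) := by
      intro s hs
      have hm := hm_pos s hs
      have hr := hr1 s hs
      have hr0 : (0:ℝ) < v s - u s := by linarith only [hr]
      have hTr0 : 0 ≤ T*(v s - u s) := mul_nonneg hT0.le hr0.le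
      have hmT : mm s^2 ≤ T^2*(v s - u s)^2 := by
        nlinarith only [mul_le_mul (hrT s hs) (hrT s hs) hm.le hTr0]
      have h4 : pu s ≤ 4*E*T^2/3*L^2/(q0*mm s^4) := by
        rw [le_div_iff₀ (mul_pos hq0pos (pow_pos hm 4))]
        have hpm : 0 ≤ pu s*(mm s^2*q0) :=
          mul_nonneg (hpu0 s hs) (mul_nonneg (sq_nonneg _) hq0pos.le)
        have h5 := mul_le_mul_of_nonneg_left hmT hpm
        have h6 := mul_le_mul_of_nonneg_left (hpu_prod s hs) (sq_nonneg T)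
        linarith only [h5, h6]
      have h7 : 4*E*T^2/3*L^2/(q0*mm s^4) ≤ bb*(pv s + pu s)/(2*mm s^2) := by
        have hQl := hqlow' s hs
        have h1 : bb*(q0*eI/mm s^2) ≤ bb*pv s := mul_le_mul_of_nonneg_left hQl hbb0
        have h2 : bb*pv s ≤ bb*(pv s + pu s) :=
          mul_le_mul_of_nonneg_left (by linarith only [hpu0 s hs]) hbb0
        have h3 : bb*(q0*eI/mm s^2) = 8*E*T^2/3*L^2/(q0*mm s^2) := by
          rw [hbbd, hEi]
          field_simp
        have h9 : 8*E*T^2/3*L^2/(q0*mm s^2) ≤ bb*(pv s + pu s) := by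
          rw [← h3]; exact h1.trans h2
        rw [div_le_div_iff₀ (mul_pos hq0pos (pow_pos hm 4)) (mul_pos two_pos (pow_pos hm 2))]
        have h10 := mul_le_mul_of_nonneg_right h9
          (mul_nonneg hq0pos.le (pow_nonneg hm.le 4))
        have h11 : 8*E*T^2/3*L^2/(q0*mm s^2)*(q0*mm s^4) = 4*E*T^2/3*L^2*(2*mm s^2) := by
          field_simp
          ring
        rw [h11] at h10
        linarith only [h10]
      exact h4.trans h7
    have hZanti : AntitoneOn (fun x => u x + bb/mm x) (Ico s₀ S) := by
      apply antiOn_Ico_of_hasDerivAt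
        (f' := fun s => pu s + (0*mm s - bb*((pv s + pu s)/2))/mm s^2)
      · intro s hs
        exact (hu' s hs).add ((hasDerivAt_const s bb).div (hmD s hs) (hm_pos s hs).ne')
      · intro s hs
        have hm := hm_pos s hs
        have h2 : (0*mm s - bb*((pv s + pu s)/2))/mm s^2
            = -(bb*(pv s + pu s)/(2*mm s^2)) := by
          field_simp
          ring
        have h1 := hpuB s hs
        rw [h2]
        linarith only [h1]
    refine ⟨?_, monoOn_Ico_of_hasDerivAt hu' hpu0⟩
    intro s hs
    have hm := hm_pos s hs
    have hCinv : C⁻¹ ≤ eI := by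
      have h1 : 1 ≤ eI*C := by
        calc (1:ℝ) = eI*E := hEeI.symm
          _ ≤ eI*C := mul_le_mul_of_nonneg_left hEC heI0.le
      calc C⁻¹ = C⁻¹*1 := (mul_one _).symm
        _ ≤ C⁻¹*(eI*C) := mul_le_mul_of_nonneg_left h1 (inv_nonneg.mpr hC0.le)
        _ = eI := by rw [mul_comm eI C, ← mul_assoc, inv_mul_cancel₀ hC0.ne', one_mul]
    have c1 : C⁻¹*q0 ≤ tOf u v s * pv s := by
      have h1 := mul_le_mul_of_nonneg_right hCinv hq0pos.le
      have h2 := hql s hs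
      linarith only [h1, h2]
    have c4 : pu s ≤ C*L^2/(tOf u v s*rOf u v s^2*q0) := by
      have hpos : (0:ℝ) < tOf u v s*rOf u v s^2*q0 := by
        rw [htOf, hrOf]
        exact mul_pos (mul_pos (pow_pos hm 2)
          (pow_pos (by linarith only [hr1 s hs] : (0:ℝ) < v s - u s) 2)) hq0pos
      rw [le_div_iff₀ hpos, htOf, hrOf]
      have h1 := hpu_prod s hs
      have h2 : 4*E/3 ≤ C := by rw [hC]; linarith only [hE0, hpos4, hpos5]
      have h3 := mul_le_mul_of_nonneg_right h2 (sq_nonneg L)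
      linarith only [h1, h3]
    have c5 : u s ≤ u s₀ + C*(L/q0)^2 := by
      have h1 := hZanti hs₀mem hs hs.1
      have h2 : 0 ≤ bb/mm s := div_nonneg hbb0 hm.le
      have h3 : bb/mm s₀ ≤ 2*bb/κ := by
        rw [div_le_div_iff₀ (hm_pos s₀ hs₀mem) (by linarith only [hκ] : (0:ℝ) < κ)]
        have h4 := mul_le_mul_of_nonneg_left (hm_lb s₀ hs₀mem) hbb0
        linarith only [h4]
      have h5 : 2*bb/κ ≤ C*(L/q0)^2 := by
        rw [div_pow]
        have h6 : 2*bb/κ = 16*E^2*T^2/(3*κ)*(L^2/q0^2) := by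
          rw [hbbd]
          field_simp
          ring
        rw [h6]
        apply mul_le_mul_of_nonneg_right _ (div_nonneg (sq_nonneg L) (sq_nonneg q0))
        rw [hC]; linarith only [hE0, hpos4]
      linarith only [h1, h2, h3, h5]
    exact ⟨c1, hqup s hs, hpu0 s hs, c4, c5⟩
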